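/- Suppose there exists a representation x_t of finite complexity (I(x_t;y^t) < ∞ for all t) whose posterior separates z_t from y^t. Then as β → 0⁺, any minimizer of the IB Lagrangian L_β = (1/T) Σ_t H_{p,q}(z_t|y^t) + β I(x_t;y^t) has IB value converging to the minimum of the unregularized cross-entropy loss, and any minimizer of L_β in the limit β → 0 is a separating representation. -/
import Mathlib

set_option autoImplicit false

open scoped BigOperators

/-- A (stochastic) representation of the past data: a posterior kernel
`qx t : y^t ↦ q(x_t|y^t)` together with a readout kernel `qz t : x_t ↦ q(z_t|x_t)`. -/
structure IBRep (T : ℕ) (H X Z : Type) [Fintype H] [Fintype X] [Fintype Z] where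
  qx : Fin T → H → X → ℝ
  qz : Fin T → X → Z → ℝ
  qx_nn : ∀ t h x, 0 ≤ qx t h x
  qx_sum : ∀ t h, ∑ x, qx t h x = 1
  qz_pos : ∀ t x z, 0 < qz t x z
  qz_sum : ∀ t x, ∑ z, qz t x z = 1

variable {T : ℕ} {H X Z : Type} [Fintype H] [Fintype X] [Fintype Z]

/-- Cross-entropy loss `L' = (1/T) ∑_t H_{p,q}(z_t|y^t)`. -/
noncomputable def CE (T : ℕ) (p : Fin T → H → Z → ℝ) (r : IBRep T H X Z) : ℝ :=
  (1 / (T : ℝ)) * ∑ t, ∑ h, ∑ z,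
    p t h z * (-Real.log (∑ x, r.qz t x z * r.qx t h x))

/-- Complexity `(1/T) ∑_t I(x_t; y^t)` of the representation. -/
noncomputable def Cx (T : ℕ) (p : Fin T → H → Z → ℝ) (r : IBRep T H X Z) : ℝ :=
  (1 / (T : ℝ)) * ∑ t, ∑ h, ∑ x,
    ((∑ z, p t h z) * r.qx t h x) *
      Real.log (((∑ z, p t h z) * r.qx t h x) /
        ((∑ z, p t h z) * (∑ h', (∑ z, p t h' z) * r.qx t h' x)))

/-- The posterior of `x_t` separates `z_t` from the past data `y^t`. -/
def Separating (T : ℕ) (p : Fin T → H → Z → ℝ) (r : IBRep T H X Z) : Prop :=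
  ∀ t h z, p t h z / (∑ z', p t h z') = ∑ x, r.qz t x z * r.qx t h x


section aux
variable {ι : Type*} [Fintype ι]

lemma term_ineq {w v : ℝ} (hw : 0 ≤ w) (hv : 0 ≤ v) (hv0 : v = 0 → w = 0) :
    w - v ≤ w * Real.log (w / v) := by
  rcases eq_or_lt_of_le hw with h0 | hwpos
  · rw [← h0]; simp; exact hv
  · have hvpos : 0 < v := lt_of_le_of_ne hv (fun h => by
      have := hv0 h.symm; exact absurd this.symm hwpos.ne)
    have h1 : Real.log (v / w) ≤ v / w - 1 := Real.log_le_sub_one_of_pos (div_pos hvpos hwpos)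
    have h2 : w * Real.log (v / w) ≤ v - w := by
      have := mul_le_mul_of_nonneg_left h1 hwpos.le
      rwa [mul_sub, mul_one, mul_div_cancel₀ _ hwpos.ne'] at this
    have h3 : Real.log (w / v) = - Real.log (v / w) := by
      rw [Real.log_div hwpos.ne' hvpos.ne', Real.log_div hvpos.ne' hwpos.ne']; ring
    rw [h3]; nlinarith

lemma term_strict {w v : ℝ} (hw : 0 < w) (hv : 0 < v) (hne : w ≠ v) :
    w - v < w * Real.log (w / v) := by
  have h1 : Real.log (v / w) < v / w - 1 := by
    apply Real.log_lt_sub_one_of_pos (div_pos hv hw)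
    intro h
    exact hne (by field_simp at h; linarith)
  have h2 : w * Real.log (v / w) < v - w := by
    have := mul_lt_mul_of_pos_left h1 hw
    rwa [mul_sub, mul_one, mul_div_cancel₀ _ hw.ne'] at this
  have h3 : Real.log (w / v) = - Real.log (v / w) := by
    rw [Real.log_div hw.ne' hv.ne', Real.log_div hv.ne' hw.ne']; ring
  rw [h3]; nlinarith

lemma gibbs (w v : ι → ℝ) (hw : ∀ i, 0 ≤ w i) (hv : ∀ i, 0 ≤ v i)
    (hv0 : ∀ i, v i = 0 → w i = 0) (hsum : ∑ i, v i = ∑ i, w i) :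
    0 ≤ ∑ i, w i * Real.log (w i / v i) := by
  have h : ∑ i, (w i - v i) ≤ ∑ i, w i * Real.log (w i / v i) :=
    Finset.sum_le_sum fun i _ => term_ineq (hw i) (hv i) (hv0 i)
  rw [Finset.sum_sub_distrib, hsum, sub_self] at h
  exact h

lemma gibbs_eq (w v : ι → ℝ) (hw : ∀ i, 0 < w i) (hv : ∀ i, 0 < v i)
    (hsum : ∑ i, v i = ∑ i, w i)
    (hle : ∑ i, w i * Real.log (w i / v i) ≤ 0) : ∀ i, w i = v i := by
  by_contra hcon
  push_neg at hcon
  obtain ⟨i₀, hi₀⟩ := hcon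
  have h : ∑ i, (w i - v i) < ∑ i, w i * Real.log (w i / v i) :=
    Finset.sum_lt_sum
      (fun i _ => term_ineq (hw i).le (hv i).le (fun h => absurd h (hv i).ne'))
      ⟨i₀, Finset.mem_univ _, term_strict (hw i₀) (hv i₀) hi₀⟩
  rw [Finset.sum_sub_distrib, hsum, sub_self] at h
  linarith

end aux

lemma q_pos (r : IBRep T H X Z) (t : Fin T) (h : H) (z : Z) :
    0 < ∑ x, r.qz t x z * r.qx t h x := by
  have hx : ∃ x, 0 < r.qx t h x := by
    by_contra hcon
    push_neg at hcon
    have h0 : ∑ x, r.qx t h x = 0 :=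
      Finset.sum_eq_zero fun x _ => le_antisymm (hcon x) (r.qx_nn t h x)
    rw [r.qx_sum t h] at h0; norm_num at h0
  obtain ⟨x₀, hx₀⟩ := hx
  exact Finset.sum_pos' (fun x _ => mul_nonneg (r.qz_pos t x z).le (r.qx_nn t h x))
    ⟨x₀, Finset.mem_univ _, mul_pos (r.qz_pos t x₀ z) hx₀⟩

lemma q_sum (r : IBRep T H X Z) (t : Fin T) (h : H) :
    ∑ z, ∑ x, r.qz t x z * r.qx t h x = 1 := by
  rw [Finset.sum_comm]
  simp_rw [← Finset.sum_mul, r.qz_sum, one_mul]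
  exact r.qx_sum t h

lemma Z_nonempty (t : Fin T) (p : Fin T → H → Z → ℝ)
    (hp_sum : ∀ t, ∑ h, ∑ z, p t h z = 1) : Nonempty Z := by
  by_contra hcon
  have : ∀ h : H, ∑ z, p t h z = 0 := fun h => by
    rw [Finset.univ_eq_empty_iff.mpr (by simpa using hcon)]; simp
  have h1 := hp_sum t
  simp only [this, Finset.sum_const_zero] at h1
  norm_num at h1

lemma CE_diff (p : Fin T → H → Z → ℝ)
    (hp_pos : ∀ t h z, 0 < p t h z) (hp_sum : ∀ t, ∑ h, ∑ z, p t h z = 1)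
    (r₀ : IBRep T H X Z) (hsep : Separating T p r₀) (r : IBRep T H X Z) :
    CE T p r - CE T p r₀ = (1 / (T : ℝ)) * ∑ t, ∑ h, ∑ z,
      p t h z * Real.log (p t h z /
        ((∑ z', p t h z') * ∑ x, r.qz t x z * r.qx t h x)) := by
  rw [CE, CE, ← mul_sub, ← Finset.sum_sub_distrib]
  congr 1
  refine Finset.sum_congr rfl fun t _ => ?_
  rw [← Finset.sum_sub_distrib]
  refine Finset.sum_congr rfl fun h _ => ?_
  rw [← Finset.sum_sub_distrib]
  refine Finset.sum_congr rfl fun z _ => ?_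
  have hZ : Nonempty Z := Z_nonempty t p hp_sum
  have hs : 0 < ∑ z', p t h z' := Finset.sum_pos (fun z _ => hp_pos t h z) Finset.univ_nonempty
  have hq : 0 < ∑ x, r.qz t x z * r.qx t h x := q_pos r t h z
  have hps : 0 < p t h z / (∑ z', p t h z') := div_pos (hp_pos t h z) hs
  rw [← hsep t h z, ← div_div,
    Real.log_div hps.ne' hq.ne', Real.log_div (hp_pos t h z).ne' hs.ne']
  ring

lemma CE_le (p : Fin T → H → Z → ℝ)
    (hp_pos : ∀ t h z, 0 < p t h z) (hp_sum : ∀ t, ∑ h, ∑ z, p t h z = 1)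
    (r₀ : IBRep T H X Z) (hsep : Separating T p r₀) (r : IBRep T H X Z) :
    CE T p r₀ ≤ CE T p r := by
  have hdiff := CE_diff p hp_pos hp_sum r₀ hsep r
  have hnn : 0 ≤ CE T p r - CE T p r₀ := by
    rw [hdiff]
    apply mul_nonneg (by positivity)
    refine Finset.sum_nonneg fun t _ => Finset.sum_nonneg fun h _ => ?_
    have := gibbs (fun z => p t h z)
      (fun z => (∑ z', p t h z') * ∑ x, r.qz t x z * r.qx t h x)
      (fun z => (hp_pos t h z).le)
      (fun z => mul_nonneg (Finset.sum_nonneg fun z' _ => (hp_pos t h z').le) (q_pos r t h z).le)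
      (fun z hz => absurd hz (by
        have hZ : Nonempty Z := Z_nonempty t p hp_sum
        have hs : 0 < ∑ z', p t h z' := Finset.sum_pos (fun z _ => hp_pos t h z) Finset.univ_nonempty
        exact (mul_pos hs (q_pos r t h z)).ne'))
      (by rw [← Finset.mul_sum, q_sum, mul_one])
    simpa using this
  linarith

lemma CE_eq_sep (hT : 0 < T) (p : Fin T → H → Z → ℝ)
    (hp_pos : ∀ t h z, 0 < p t h z) (hp_sum : ∀ t, ∑ h, ∑ z, p t h z = 1)
    (r₀ : IBRep T H X Z) (hsep : Separating T p r₀) (r : IBRep T H X Z)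
    (hle : CE T p r ≤ CE T p r₀) : Separating T p r := by
  have hge := CE_le p hp_pos hp_sum r₀ hsep r
  have hdiff := CE_diff p hp_pos hp_sum r₀ hsep r
  set D : Fin T → H → ℝ := fun t h => ∑ z,
      p t h z * Real.log (p t h z /
        ((∑ z', p t h z') * ∑ x, r.qz t x z * r.qx t h x)) with hD
  have hDnn : ∀ t h, 0 ≤ D t h := by
    intro t h
    refine gibbs (fun z => p t h z)
      (fun z => (∑ z', p t h z') * ∑ x, r.qz t x z * r.qx t h x)
      (fun z => (hp_pos t h z).le)
      (fun z => mul_nonneg (Finset.sum_nonneg fun z' _ => (hp_pos t h z').le) (q_pos r t h z).le)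
      (fun z hz => absurd hz ?_)
      (by rw [← Finset.mul_sum, q_sum, mul_one])
    have hZ : Nonempty Z := Z_nonempty t p hp_sum
    have hs : 0 < ∑ z', p t h z' := Finset.sum_pos (fun z _ => hp_pos t h z) Finset.univ_nonempty
    exact (mul_pos hs (q_pos r t h z)).ne'
  have hTpos : (0:ℝ) < 1 / (T : ℝ) := by
    have : (0:ℝ) < (T:ℝ) := by exact_mod_cast hT
    positivity
  have hSzero : ∑ t, ∑ h, D t h = 0 := by
    have h1 : (1 / (T : ℝ)) * ∑ t, ∑ h, D t h = 0 := by rw [← hdiff]; linarith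
    rcases mul_eq_zero.mp h1 with h | h
    · exact absurd h hTpos.ne'
    · exact h
  have hDzero : ∀ t h, D t h = 0 := by
    intro t h
    have h1 : ∀ t ∈ Finset.univ, ∑ h, D t h = 0 :=
      (Finset.sum_eq_zero_iff_of_nonneg
        (fun t _ => Finset.sum_nonneg fun h _ => hDnn t h)).mp hSzero
    exact (Finset.sum_eq_zero_iff_of_nonneg (fun h _ => hDnn t h)).mp
      (h1 t (Finset.mem_univ t)) h (Finset.mem_univ h)
  intro t h z
  have hZ : Nonempty Z := Z_nonempty t p hp_sum
  have hs : 0 < ∑ z', p t h z' := Finset.sum_pos (fun z _ => hp_pos t h z) Finset.univ_nonempty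
  have heq := gibbs_eq (fun z => p t h z)
    (fun z => (∑ z', p t h z') * ∑ x, r.qz t x z * r.qx t h x)
    (fun z => hp_pos t h z)
    (fun z => mul_pos hs (q_pos r t h z))
    (by rw [← Finset.mul_sum, q_sum, mul_one])
    (le_of_eq (hDzero t h)) z
  rw [heq]
  field_simp

lemma Cx_nonneg (p : Fin T → H → Z → ℝ)
    (hp_pos : ∀ t h z, 0 < p t h z) (hp_sum : ∀ t, ∑ h, ∑ z, p t h z = 1)
    (r : IBRep T H X Z) : 0 ≤ Cx T p r := by
  apply mul_nonneg (by positivity)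
  refine Finset.sum_nonneg fun t _ => ?_
  have hann : ∀ h, 0 ≤ ∑ z, p t h z :=
    fun h => Finset.sum_nonneg fun z _ => (hp_pos t h z).le
  have key := gibbs (ι := H × X)
    (fun hx => (∑ z, p t hx.1 z) * r.qx t hx.1 hx.2)
    (fun hx => (∑ z, p t hx.1 z) * (∑ h', (∑ z, p t h' z) * r.qx t h' hx.2))
    (fun hx => mul_nonneg (hann hx.1) (r.qx_nn t hx.1 hx.2))
    (fun hx => mul_nonneg (hann hx.1)
      (Finset.sum_nonneg fun h' _ => mul_nonneg (hann h') (r.qx_nn t h' hx.2)))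
    (fun hx hv => ?_)
    ?_
  · rw [Fintype.sum_prod_type] at key
    exact key
  · rcases mul_eq_zero.mp hv with ha | hm
    · show (∑ z, p t hx.1 z) * r.qx t hx.1 hx.2 = 0
      rw [ha, zero_mul]
    · have hterm : ∀ h' ∈ Finset.univ, (∑ z, p t h' z) * r.qx t h' hx.2 = 0 :=
        (Finset.sum_eq_zero_iff_of_nonneg
          (fun h' _ => mul_nonneg (hann h') (r.qx_nn t h' hx.2))).mp hm
      exact hterm hx.1 (Finset.mem_univ _)
  · rw [Fintype.sum_prod_type, Fintype.sum_prod_type]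
    have hmx : ∑ x, ∑ h', (∑ z, p t h' z) * r.qx t h' x = 1 := by
      rw [Finset.sum_comm]
      simp_rw [← Finset.mul_sum, r.qx_sum, mul_one]
      exact hp_sum t
    calc ∑ h, ∑ x, (∑ z, p t h z) * (∑ h', (∑ z, p t h' z) * r.qx t h' x)
        = ∑ h, (∑ z, p t h z) * ∑ x, ∑ h', (∑ z, p t h' z) * r.qx t h' x := by
          simp_rw [Finset.mul_sum]
      _ = ∑ h, (∑ z, p t h z) := by rw [hmx]; simp
      _ = ∑ h, ∑ x, (∑ z, p t h z) * r.qx t h x := by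
          simp_rw [← Finset.mul_sum, r.qx_sum, mul_one]

/-- If there is a separating representation of finite complexity,
then as `β → 0⁺` the infimum of the IB Lagrangian `L_β = CE + β·Cx` converges to
the minimum of the unregularized cross-entropy loss, and any minimizer of the
`β → 0` limit `L_0 = CE` is a separating representation. -/
theorem stmt_12 (T : ℕ) (hT : 0 < T)
    (p : Fin T → H → Z → ℝ)
    (hp_pos : ∀ t h z, 0 < p t h z) (hp_sum : ∀ t, ∑ h, ∑ z, p t h z = 1)
    (r₀ : IBRep T H X Z) (hsep : Separating T p r₀)
    (C : ℝ) (hC : Cx T p r₀ ≤ C) :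
    Filter.Tendsto (fun β : ℝ => ⨅ r : IBRep T H X Z, (CE T p r + β * Cx T p r))
        (nhdsWithin 0 (Set.Ioi 0)) (nhds (⨅ r : IBRep T H X Z, CE T p r)) ∧
      ∀ r : IBRep T H X Z, (∀ r' : IBRep T H X Z, CE T p r ≤ CE T p r') →
        Separating T p r := by
  have : Nonempty (IBRep T H X Z) := ⟨r₀⟩
  have hmin : ∀ r : IBRep T H X Z, CE T p r₀ ≤ CE T p r := CE_le p hp_pos hp_sum r₀ hsep
  have hCxnn : ∀ r : IBRep T H X Z, 0 ≤ Cx T p r := Cx_nonneg p hp_pos hp_sum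
  have hbdd : BddBelow (Set.range fun r : IBRep T H X Z => CE T p r) :=
    ⟨CE T p r₀, by rintro _ ⟨r, rfl⟩; exact hmin r⟩
  have hinf : (⨅ r : IBRep T H X Z, CE T p r) = CE T p r₀ :=
    le_antisymm (ciInf_le hbdd r₀) (le_ciInf hmin)
  constructor
  · rw [hinf]
    refine tendsto_of_tendsto_of_tendsto_of_le_of_le'
      (g := fun _ : ℝ => CE T p r₀) (h := fun β : ℝ => CE T p r₀ + β * C)
      tendsto_const_nhds ?_ ?_ ?_
    · have hcont : Filter.Tendsto (fun β : ℝ => CE T p r₀ + β * C) (nhds 0)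
          (nhds (CE T p r₀ + 0 * C)) :=
        (continuous_const.add (continuous_id.mul continuous_const)).tendsto 0
      simpa using hcont.mono_left nhdsWithin_le_nhds
    · filter_upwards [self_mem_nhdsWithin] with β hβ
      have hβ0 : (0:ℝ) < β := hβ
      exact le_ciInf fun r => by nlinarith [hmin r, mul_nonneg hβ0.le (hCxnn r)]
    · filter_upwards [self_mem_nhdsWithin] with β hβ
      have hβ0 : (0:ℝ) < β := hβ
      have hbdd2 : BddBelow (Set.range fun r : IBRep T H X Z => CE T p r + β * Cx T p r) :=
        ⟨CE T p r₀, by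
          rintro _ ⟨r, rfl⟩
          show CE T p r₀ ≤ CE T p r + β * Cx T p r
          nlinarith [hmin r, mul_nonneg hβ0.le (hCxnn r)]⟩
      refine le_trans (ciInf_le hbdd2 r₀) ?_
      have := mul_le_mul_of_nonneg_left hC hβ0.le
      linarith
  · intro r hr
    exact CE_eq_sep hT p hp_pos hp_sum r₀ hsep r (hr r₀)
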